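/- Fix t > 0 and let μ(x) = e^{−1}·(x+t)·(1 + t/x)^{x/t} for x > 0. Let x₁, x₂, y₁, y₂ ∈ (0, 1−t) be such that min(x₁, x₂, y₁, y₂) ∈ {y₁, y₂} and y₁ + y₂ ≤ x₁ + x₂. Then μ(x₁)·μ(x₂) ≥ μ(y₁)·μ(y₂). -/

import Mathlib

/-- The identric mean of `x` and `x + t`:
`μ(x) = e⁻¹ (x+t) (1 + t/x)^(x/t)`. -/
noncomputable def identric (t x : ℝ) : ℝ :=
  (Real.exp 1)⁻¹ * (x + t) * (1 + t / x) ^ (x / t)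

namespace IdentricAux

open Real Set

/-- `F t x = (x+t) log (x+t) - x log x`. -/
noncomputable def F (t x : ℝ) : ℝ := (x + t) * Real.log (x + t) - x * Real.log x

lemma hasDerivAt_F (t : ℝ) {x : ℝ} (hx : x ≠ 0) (hxt : x + t ≠ 0) :
    HasDerivAt (F t) (Real.log (x + t) - Real.log x) x := by
  have h1 : HasDerivAt (fun u : ℝ => (u + t) * Real.log (u + t))
      ((Real.log (x + t) + 1) * 1) x := by
    exact (Real.hasDerivAt_mul_log hxt).comp x ((hasDerivAt_id x).add_const t)
  have h2 : HasDerivAt (fun x => x * Real.log x) (Real.log x + 1) x := Real.hasDerivAt_mul_log hx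
  have := h1.sub h2
  exact this.congr_deriv (by ring)

lemma identric_eq (t : ℝ) (ht : 0 < t) {x : ℝ} (hx : 0 < x) :
    identric t x = Real.exp (F t x / t - 1) := by
  have hxt : 0 < x + t := by linarith
  have h1 : (1 : ℝ) + t / x = (x + t) / x := by field_simp
  have h2 : (0:ℝ) < 1 + t / x := by rw [h1]; positivity
  rw [identric, Real.rpow_def_of_pos h2, h1, Real.log_div hxt.ne' hx.ne']
  have hE : F t x / t - 1 = (Real.log (x + t) - Real.log x) * (x / t) + Real.log (x + t) + (-1) := by
    rw [F]; field_simp; ring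
  rw [hE, Real.exp_add, Real.exp_add, Real.exp_log hxt, Real.exp_neg]
  ring

lemma F_mono (t : ℝ) (ht : 0 < t) : MonotoneOn (F t) (Set.Ioi 0) := by
  have hd : ∀ x ∈ interior (Set.Ioi (0:ℝ)),
      HasDerivAt (F t) (Real.log (x + t) - Real.log x) x := by
    intro x hx
    rw [interior_Ioi] at hx
    have hx' : 0 < x := hx
    exact hasDerivAt_F t (ne_of_gt hx') (ne_of_gt (by linarith))
  apply monotoneOn_of_deriv_nonneg (convex_Ioi 0)
  · intro x hx
    exact ((hd x (by rwa [interior_Ioi])).continuousAt).continuousWithinAt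
  · intro x hx
    exact (hd x hx).differentiableAt.differentiableWithinAt
  · intro x hx
    rw [(hd x hx).deriv]
    rw [interior_Ioi] at hx
    have : Real.log x ≤ Real.log (x + t) := Real.log_le_log hx (by linarith)
    linarith

/-- Increment inequality coming from concavity of `F t`. -/
lemma F_incr (t : ℝ) (ht : 0 < t) {s : ℝ} (hs : 0 ≤ s) :
    AntitoneOn (fun u => F t (u + s) - F t u) (Set.Ioi 0) := by
  have hd : ∀ x ∈ interior (Set.Ioi (0:ℝ)),
      HasDerivAt (fun u => F t (u + s) - F t u)
        ((Real.log (x + s + t) - Real.log (x + s)) - (Real.log (x + t) - Real.log x)) x := by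
    intro x hx
    rw [interior_Ioi] at hx
    have hx' : 0 < x := hx
    have h1 : HasDerivAt (fun u : ℝ => F t (u + s))
        ((Real.log (x + s + t) - Real.log (x + s)) * 1) x :=
      HasDerivAt.comp (h₂ := F t) (h := fun u => u + s) x (hasDerivAt_F t (x := x + s) (ne_of_gt (by linarith : (0:ℝ) < x + s))
        (ne_of_gt (by linarith : (0:ℝ) < x + s + t))) ((hasDerivAt_id x).add_const s)
    have h2 := hasDerivAt_F t (ne_of_gt hx') (ne_of_gt (by linarith : (0:ℝ) < x + t))
    have := h1.sub h2
    exact this.congr_deriv (by ring)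
  apply antitoneOn_of_deriv_nonpos (convex_Ioi 0)
  · intro x hx
    exact ((hd x (by rwa [interior_Ioi])).continuousAt).continuousWithinAt
  · intro x hx
    exact (hd x hx).differentiableAt.differentiableWithinAt
  · intro x hx
    rw [(hd x hx).deriv]
    rw [interior_Ioi] at hx
    have hx' : 0 < x := hx
    have hkey : Real.log ((x + s + t) * x) ≤ Real.log ((x + t) * (x + s)) := by
      apply Real.log_le_log (by nlinarith)
      nlinarith
    rw [Real.log_mul (ne_of_gt (by linarith : (0:ℝ) < x + s + t)) (ne_of_gt hx'),
        Real.log_mul (ne_of_gt (by linarith : (0:ℝ) < x + t))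
          (ne_of_gt (by linarith : (0:ℝ) < x + s))] at hkey
    linarith

lemma key (t : ℝ) (ht : 0 < t) {a b y z : ℝ} (hy : 0 < y)
    (hya : y ≤ a) (hab : a ≤ b) (hyz : y ≤ z) (hsum : y + z ≤ a + b) :
    F t y + F t z ≤ F t a + F t b := by
  have ha : 0 < a := lt_of_lt_of_le hy hya
  have hb : 0 < b := lt_of_lt_of_le ha hab
  have hz : 0 < z := lt_of_lt_of_le hy hyz
  have hmono := F_mono t ht
  by_cases hzb : z ≤ b
  · have h1 : F t y ≤ F t a :=
      hmono (show y ∈ Set.Ioi 0 from hy) (show a ∈ Set.Ioi 0 from ha) hya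
    have h2 : F t z ≤ F t b :=
      hmono (show z ∈ Set.Ioi 0 from hz) (show b ∈ Set.Ioi 0 from hb) hzb
    linarith
  · push_neg at hzb
    have hs0 : (0:ℝ) ≤ z - b := by linarith
    have hincr := F_incr t ht hs0 (show y ∈ Set.Ioi (0:ℝ) from hy)
      (show b ∈ Set.Ioi (0:ℝ) from hb) (le_trans hya hab)
    simp only at hincr
    rw [show b + (z - b) = z from by ring] at hincr
    -- hincr : F t z - F t b ≤ F t (y + (z - b)) - F t y
    have hys : 0 < y + (z - b) := by linarith
    have hysa : y + (z - b) ≤ a := by linarith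
    have h3 : F t (y + (z - b)) ≤ F t a :=
      hmono (show _ ∈ Set.Ioi (0:ℝ) from hys) (show a ∈ Set.Ioi 0 from ha) hysa
    linarith

end IdentricAux

/-- Sufficient condition for the entropic relation: if the minimum of
`x₁, x₂, y₁, y₂ ∈ (0, 1-t)` is `y₁` or `y₂` and `y₁ + y₂ ≤ x₁ + x₂`, then
`μ(x₁) μ(x₂) ≥ μ(y₁) μ(y₂)`. -/
theorem identric_prod_ge (t : ℝ) (ht : 0 < t)
    (x₁ x₂ y₁ y₂ : ℝ)
    (hx₁ : x₁ ∈ Set.Ioo (0 : ℝ) (1 - t)) (hx₂ : x₂ ∈ Set.Ioo (0 : ℝ) (1 - t))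
    (hy₁ : y₁ ∈ Set.Ioo (0 : ℝ) (1 - t)) (hy₂ : y₂ ∈ Set.Ioo (0 : ℝ) (1 - t))
    (hmin : min (min x₁ x₂) (min y₁ y₂) = y₁ ∨ min (min x₁ x₂) (min y₁ y₂) = y₂)
    (hsum : y₁ + y₂ ≤ x₁ + x₂) :
    identric t y₁ * identric t y₂ ≤ identric t x₁ * identric t x₂ := by
  open IdentricAux in
  obtain ⟨hx₁0, _⟩ := hx₁
  obtain ⟨hx₂0, _⟩ := hx₂
  obtain ⟨hy₁0, _⟩ := hy₁
  obtain ⟨hy₂0, _⟩ := hy₂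
  -- the overall minimum is `min y₁ y₂`
  have hminy : min y₁ y₂ ≤ min x₁ x₂ := by
    rcases hmin with h | h
    · have h1 : min (min x₁ x₂) (min y₁ y₂) ≤ min x₁ x₂ := min_le_left _ _
      rw [h] at h1
      exact le_trans (min_le_left _ _) h1
    · have h1 : min (min x₁ x₂) (min y₁ y₂) ≤ min x₁ x₂ := min_le_left _ _
      rw [h] at h1
      exact le_trans (min_le_right _ _) h1
  -- reduce to the F inequality
  have hFkey : F t y₁ + F t y₂ ≤ F t x₁ + F t x₂ := by
    have hy : (0:ℝ) < min y₁ y₂ := lt_min hy₁0 hy₂0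
    have h := IdentricAux.key t ht (a := min x₁ x₂) (b := max x₁ x₂)
      (y := min y₁ y₂) (z := max y₁ y₂) hy hminy (min_le_max) (min_le_max)
      (by rw [min_add_max, min_add_max]; exact hsum)
    calc F t y₁ + F t y₂ = F t (min y₁ y₂) + F t (max y₁ y₂) := by
          rcases le_total y₁ y₂ with h' | h'
          · rw [min_eq_left h', max_eq_right h']
          · rw [min_eq_right h', max_eq_left h']; ring
      _ ≤ F t (min x₁ x₂) + F t (max x₁ x₂) := h
      _ = F t x₁ + F t x₂ := by
          rcases le_total x₁ x₂ with h' | h'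
          · rw [min_eq_left h', max_eq_right h']
          · rw [min_eq_right h', max_eq_left h']; ring
  rw [IdentricAux.identric_eq t ht hx₁0, IdentricAux.identric_eq t ht hx₂0,
      IdentricAux.identric_eq t ht hy₁0, IdentricAux.identric_eq t ht hy₂0,
      ← Real.exp_add, ← Real.exp_add, Real.exp_le_exp]
  have h2 : (F t y₁ + F t y₂) / t ≤ (F t x₁ + F t x₂) / t :=
    (div_le_div_iff_of_pos_right ht).mpr hFkey
  rw [add_div, add_div] at h2
  linarith
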